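/- Let ℓ be a log-scale on X with constant δ. If (x_n) and (y_n) are non-equivalent Cauchy sequences (i.e., ℓ(x_n, y_n) does not tend to ∞), then there exists Δ > 0 such that any two partial limits of the sequence ℓ(x_n, y_n) differ by at most Δ. -/

import Mathlib

open Filter

/-- A log-scale on a set `X` (values in `ℝ ∪ {∞}`, modeled as `EReal`). -/
structure LogScale (X : Type*) where
  ℓ : X → X → EReal
  symm : ∀ x y, ℓ x y = ℓ y x
  ne_bot : ∀ x y, ℓ x y ≠ ⊥
  top_iff : ∀ x y, ℓ x y = ⊤ ↔ x = y
  δ : ℝ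
  δ_nonneg : 0 ≤ δ
  quasi : ∀ x y z, ℓ x z ≥ min (ℓ x y) (ℓ y z) - (δ : EReal)

/-- If `(x n)` and `(y n)` are non-equivalent Cauchy sequences for a log-scale `ℓ`
(Cauchy: `ℓ (x n) (x m) → ∞`; non-equivalent: `ℓ (x n) (y n)` does not tend to `∞`),
then there is `Δ > 0` such that any two partial limits of the sequence
`ℓ (x n) (y n)` differ by at most `Δ`. -/
theorem partial_limits_of_nonequivalent_cauchy {X : Type*} (L : LogScale X)
    (x y : ℕ → X)
    (hx : Tendsto (fun p : ℕ × ℕ => L.ℓ (x p.1) (x p.2)) atTop (nhds ⊤))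
    (hy : Tendsto (fun p : ℕ × ℕ => L.ℓ (y p.1) (y p.2)) atTop (nhds ⊤))
    (hne : ¬ Tendsto (fun n => L.ℓ (x n) (y n)) atTop (nhds ⊤)) :
    ∃ Δ : ℝ, 0 < Δ ∧ ∀ a b : EReal,
      MapClusterPt a atTop (fun n => L.ℓ (x n) (y n)) →
      MapClusterPt b atTop (fun n => L.ℓ (x n) (y n)) →
      a ≤ b + (Δ : EReal) := by
  refine ⟨2 * L.δ + 1, by linarith [L.δ_nonneg], fun a b ha hb => ?_⟩
  by_contra hab
  push_neg at hab
  -- pick a real r with b + (2δ+1) < r < a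
  obtain ⟨r, hr1, hr2⟩ := EReal.exists_between_coe_real hab
  have hbr : b < ((r - 2 * L.δ : ℝ) : EReal) := by
    by_contra hle
    push_neg at hle
    have h2 : ((r - 2 * L.δ : ℝ) : EReal) + ((2 * L.δ + 1 : ℝ) : EReal) ≤
        b + ((2 * L.δ + 1 : ℝ) : EReal) := add_le_add_left hle _
    rw [← EReal.coe_add] at h2
    have h3 : ((r - 2 * L.δ + (2 * L.δ + 1) : ℝ) : EReal) < (r : EReal) :=
      lt_of_le_of_lt h2 hr1
    rw [EReal.coe_lt_coe_iff] at h3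
    linarith
  -- eventual bounds from Cauchy conditions
  have hxr : ∀ᶠ p : ℕ × ℕ in atTop, (r : EReal) < L.ℓ (x p.1) (x p.2) :=
    hx.eventually (eventually_gt_nhds (EReal.coe_lt_top r))
  have hyr : ∀ᶠ p : ℕ × ℕ in atTop, (r : EReal) < L.ℓ (y p.1) (y p.2) :=
    hy.eventually (eventually_gt_nhds (EReal.coe_lt_top r))
  obtain ⟨⟨N1, N2⟩, hN⟩ := eventually_atTop.1 (hxr.and hyr)
  set N := max N1 N2 with hNdef
  have hN' : ∀ n m, N ≤ n → N ≤ m → (r : EReal) < L.ℓ (x n) (x m) ∧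
      (r : EReal) < L.ℓ (y n) (y m) := by
    intro n m hn hm
    exact hN (n, m) ⟨le_trans (le_max_left _ _) hn, le_trans (le_max_right _ _) hm⟩
  -- pick n ≥ N with ℓ(x n, y n) > r, using a cluster point
  have hfreq_a : ∃ᶠ n in atTop, (r : EReal) < L.ℓ (x n) (y n) :=
    mapClusterPt_iff_frequently.1 ha _ (Ioi_mem_nhds hr2)
  obtain ⟨n, hnN, hna⟩ := (frequently_atTop.1 hfreq_a) N
  -- pick m ≥ N with ℓ(x m, y m) < r - 2δ, using b cluster point
  have hfreq_b : ∃ᶠ m in atTop, L.ℓ (x m) (y m) < ((r - 2 * L.δ : ℝ) : EReal) :=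
    mapClusterPt_iff_frequently.1 hb _ (Iio_mem_nhds hbr)
  obtain ⟨m, hmN, hmb⟩ := (frequently_atTop.1 hfreq_b) N
  -- derive contradiction via the quasi-ultrametric inequality applied twice
  obtain ⟨hA, -⟩ := hN' m n hmN hnN
  obtain ⟨-, hC⟩ := hN' n m hnN hmN
  have step1 : L.ℓ (x n) (y m) ≥ ((r - L.δ : ℝ) : EReal) := by
    refine le_trans ?_ (L.quasi (x n) (y n) (y m))
    have hmin : ((r : ℝ) : EReal) ≤ min (L.ℓ (x n) (y n)) (L.ℓ (y n) (y m)) :=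
      le_min hna.le hC.le
    calc ((r - L.δ : ℝ) : EReal) = ((r : ℝ) : EReal) - (L.δ : EReal) := by
          rw [← EReal.coe_sub]
      _ ≤ min (L.ℓ (x n) (y n)) (L.ℓ (y n) (y m)) - (L.δ : EReal) :=
          EReal.sub_le_sub hmin le_rfl
  have step2 : L.ℓ (x m) (y m) ≥ ((r - 2 * L.δ : ℝ) : EReal) := by
    refine le_trans ?_ (L.quasi (x m) (x n) (y m))
    have hmin : ((r - L.δ : ℝ) : EReal) ≤ min (L.ℓ (x m) (x n)) (L.ℓ (x n) (y m)) := by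
      refine le_min (le_trans ?_ hA.le) step1
      exact_mod_cast (by linarith [L.δ_nonneg] : r - L.δ ≤ r)
    calc ((r - 2 * L.δ : ℝ) : EReal) = ((r - L.δ : ℝ) : EReal) - (L.δ : EReal) := by
          rw [← EReal.coe_sub]; congr 1; ring
      _ ≤ min (L.ℓ (x m) (x n)) (L.ℓ (x n) (y m)) - (L.δ : EReal) :=
          EReal.sub_le_sub hmin le_rfl
  exact absurd (lt_of_le_of_lt step2 hmb) (lt_irrefl _)
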